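/- A decomposition N = N_1 ∪ ... ∪ N_k of a chemical reaction network is bi-independent if and only if it is independent or incidence independent and the deficiencies satisfy δ = δ_1 + ... + δ_k. -/

import Mathlib

open scoped Classical

noncomputable section

/-- A reaction: an ordered pair (reactant complex, product complex) of vectors in ℝ^S. -/
abbrev Rxn (S : Type*) := (S → ℝ) × (S → ℝ)

variable {S : Type*} [Fintype S]

/-- The set of complexes occurring in a reaction set. -/
def complexesOf (R : Finset (Rxn S)) : Finset (S → ℝ) :=
  R.image Prod.fst ∪ R.image Prod.snd

/-- `(C, R)` is a chemical reaction network on the species set `S`: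
complexes have nonnegative integer coordinates, reactions go between complexes,
no reaction is a loop, and every complex occurs in at least one reaction. -/
def IsCRN (C : Finset (S → ℝ)) (R : Finset (Rxn S)) : Prop :=
  C.Nonempty ∧ R.Nonempty ∧
  (∀ y ∈ C, ∀ s, ∃ n : ℕ, y s = (n : ℝ)) ∧
  (∀ r ∈ R, r.1 ∈ C ∧ r.2 ∈ C) ∧
  (∀ r ∈ R, r.1 ≠ r.2) ∧
  (∀ y ∈ C, ∃ r ∈ R, r.1 = y ∨ r.2 = y)

/-- The stoichiometric subspace `span {y' - y : (y, y') ∈ R}`. -/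
def stoichSubspace (R : Finset (Rxn S)) : Submodule ℝ (S → ℝ) :=
  Submodule.span ℝ ((fun r : Rxn S => r.2 - r.1) '' ↑R)

/-- The rank `s = dim S` of the network. -/
def crnRank (R : Finset (Rxn S)) : ℕ := Module.finrank ℝ (stoichSubspace R)

/-- The standard basis vector `ω_y` of the complex space `ℝ^C` (realized inside
the space of real-valued functions on complexes). -/
def omegaC (y : S → ℝ) : (S → ℝ) → ℝ := fun z => if z = y then 1 else 0

/-- The image of the incidence map `I_a`, i.e. the span of the vectors
`ω_{y'} - ω_y` over reactions `y → y'`. -/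
def incImage (R : Finset (Rxn S)) : Submodule ℝ ((S → ℝ) → ℝ) :=
  Submodule.span ℝ ((fun r : Rxn S => omegaC r.2 - omegaC r.1) '' ↑R)

/-- The underlying undirected graph of `(C, R)`, on the complexes occurring in `R`. -/
def linkGraph (R : Finset (Rxn S)) : SimpleGraph {y : S → ℝ // y ∈ complexesOf R} where
  Adj a b := a ≠ b ∧ ((a.1, b.1) ∈ R ∨ (b.1, a.1) ∈ R)
  symm := ⟨fun a b h => ⟨h.1.symm, h.2.symm⟩⟩
  loopless := ⟨fun a h => h.1 rfl⟩

/-- `n`, the number of complexes. -/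
def numComplexes (R : Finset (Rxn S)) : ℕ := (complexesOf R).card

/-- `l`, the number of linkage classes (connected components of the
underlying undirected graph). -/
def numLinkageClasses (R : Finset (Rxn S)) : ℕ :=
  Nat.card (linkGraph R).ConnectedComponent

/-- The deficiency `δ = n - l - s` (as an integer). -/
def deficiency (R : Finset (Rxn S)) : ℤ :=
  (numComplexes R : ℤ) - (numLinkageClasses R : ℤ) - (crnRank R : ℤ)

/-- A covering of the reaction set `R`: a family of subsets of `R` whose union is `R`. -/
def IsCovering {ι : Type*} (R : Finset (Rxn S)) (f : ι → Finset (Rxn S)) : Prop :=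
  (∀ i, f i ⊆ R) ∧ ∀ r ∈ R, ∃ i, r ∈ f i

/-- A decomposition of the reaction set `R`: a partition of `R` into nonempty subsets. -/
def IsDecomposition {ι : Type*} (R : Finset (Rxn S)) (f : ι → Finset (Rxn S)) : Prop :=
  (∀ i, (f i).Nonempty) ∧ (Pairwise fun i j => Disjoint (f i) (f j)) ∧
  (∀ i, f i ⊆ R) ∧ (∀ r ∈ R, ∃ i, r ∈ f i)

/-- Independence: the stoichiometric subspace is the direct sum of those of the subnetworks. -/
def IsIndependent {ι : Type*} (R : Finset (Rxn S)) (f : ι → Finset (Rxn S)) : Prop :=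
  (⨆ i, stoichSubspace (f i)) = stoichSubspace R ∧
  iSupIndep fun i => stoichSubspace (f i)

/-- Incidence independence: the image of the incidence map is the direct sum of the
images of the incidence maps of the subnetworks. -/
def IsIncidenceIndependent {ι : Type*} (R : Finset (Rxn S)) (f : ι → Finset (Rxn S)) : Prop :=
  (⨆ i, incImage (f i)) = incImage R ∧
  iSupIndep fun i => incImage (f i)

/-- A `𝒞`-decomposition: the complex sets of the subnetworks are pairwise disjoint. -/
def CDisjoint {ι : Type*} (f : ι → Finset (Rxn S)) : Prop :=
  Pairwise fun i j => Disjoint (complexesOf (f i)) (complexesOf (f j))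

/-- The set of nonzero complexes of a reaction set. -/
def nonzeroComplexesOf (R : Finset (Rxn S)) : Finset (S → ℝ) := (complexesOf R).erase 0

/-- A `𝒞*`-decomposition: the sets of nonzero complexes are pairwise disjoint. -/
def CstarDisjoint {ι : Type*} (f : ι → Finset (Rxn S)) : Prop :=
  Pairwise fun i j => Disjoint (nonzeroComplexesOf (f i)) (nonzeroComplexesOf (f j))

/-- A coarsening: each block of `f` is contained in exactly one block of `g`. -/
def IsCoarsening {ι κ : Type*} (f : ι → Finset (Rxn S)) (g : κ → Finset (Rxn S)) : Prop :=
  ∀ i, ∃! j, f i ⊆ g j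

/-- Undirected reachability in the graph `(C, R)`. -/
def undirReach (R : Finset (Rxn S)) : (S → ℝ) → (S → ℝ) → Prop :=
  Relation.ReflTransGen fun y z => (y, z) ∈ R ∨ (z, y) ∈ R

/-- Directed reachability in the digraph `(C, R)`. -/
def dirReach (R : Finset (Rxn S)) : (S → ℝ) → (S → ℝ) → Prop :=
  Relation.ReflTransGen fun y z => (y, z) ∈ R

/-- Weak reversibility: every connected component of the directed graph `(C, R)`
is strongly connected. -/
def WeaklyReversible (R : Finset (Rxn S)) : Prop :=
  ∀ y z, undirReach R y z → dirReach R y z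

/-- The set of complex balanced equilibria `Z₊(N, K)` of a kinetics `K` on the
(sub)network with reaction set `R`: positive vectors `x` with `I_a K(x) = 0`. -/
def Zplus (R : Finset (Rxn S)) (K : (S → ℝ) → Rxn S → ℝ) : Set (S → ℝ) :=
  {x | (∀ s, 0 < x s) ∧ ∑ r ∈ R, K x r • (omegaC r.2 - omegaC r.1) = 0}

/-- The reactions lying in the linkage class of the zero complex. -/
def zeroLinkReactions (R : Finset (Rxn S)) : Finset (Rxn S) :=
  R.filter fun r => undirReach R 0 r.1

/-- The reaction set of the linkage class `c`: all reactions whose complexes lie in `c`. -/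
def lcReactions (R : Finset (Rxn S)) (c : (linkGraph R).ConnectedComponent) :
    Finset (Rxn S) :=
  R.filter fun r => ∃ h : r.1 ∈ complexesOf R, (linkGraph R).connectedComponentMk ⟨r.1, h⟩ = c

/-- The network has independent linkage classes (ILC): the linkage class
decomposition is independent. -/
def HasILC (R : Finset (Rxn S)) : Prop := IsIndependent R (lcReactions R)

open Module Submodule

section Aux
variable {K M : Type*} [Field K] [AddCommGroup M] [Module K M]

lemma aux_supIndep_insert {ι : Type*} [DecidableEq ι] {V : ι → Submodule K M} {s : Finset ι}
    {a : ι} (ha : a ∉ s) (hs : s.SupIndep V) (hd : Disjoint (V a) (s.sup V)) :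
    (insert a s).SupIndep V := by
  rw [Finset.supIndep_iff_disjoint_erase] at hs ⊢
  intro i hi
  rcases Finset.mem_insert.mp hi with hi1 | hi2
  · subst hi1; rwa [Finset.erase_insert ha]
  · have hia : i ≠ a := by rintro rfl; exact ha hi2
    rw [Finset.erase_insert_of_ne hia.symm, Finset.sup_insert]
    have h1 := hs i hi2
    have h2 : Disjoint (V i ⊔ (s.erase i).sup V) (V a) := by
      refine Disjoint.mono_left ?_ hd.symm
      exact sup_le (Finset.le_sup hi2) (Finset.sup_mono (Finset.erase_subset _ _))
    have h3 := h1.disjoint_sup_right_of_disjoint_sup_left h2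
    rwa [sup_comm] at h3

lemma aux_finrank_sup {ι : Type*} [DecidableEq ι] (V : ι → Submodule K M)
    [∀ i, FiniteDimensional K (V i)] (s : Finset ι) :
    finrank K ↥(s.sup V) ≤ ∑ i ∈ s, finrank K (V i) ∧
      (s.SupIndep V ↔ finrank K ↥(s.sup V) = ∑ i ∈ s, finrank K (V i)) := by
  induction s using Finset.induction_on with
  | empty => simp
  | @insert a s ha ih =>
    rw [Finset.sup_insert, Finset.sum_insert ha]
    have key := Submodule.finrank_sup_add_finrank_inf_eq (V a) (s.sup V)
    refine ⟨by omega, ?_, ?_⟩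
    · intro h
      have hd : Disjoint (V a) (s.sup V) := by
        have := Finset.supIndep_iff_disjoint_erase.mp h a (Finset.mem_insert_self a s)
        rwa [Finset.erase_insert ha] at this
      have hinf : finrank K ↥(V a ⊓ s.sup V) = 0 := by
        rw [disjoint_iff.mp hd, finrank_bot]
      have hsum := (ih.2).mp (h.subset (Finset.subset_insert a s))
      omega
    · intro h
      have h1 := ih.1
      have hs : finrank K ↥(s.sup V) = ∑ i ∈ s, finrank K (V i) := by omega
      have hinf : finrank K ↥(V a ⊓ s.sup V) = 0 := by omega
      have hd : Disjoint (V a) (s.sup V) := by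
        rw [disjoint_iff, ← Submodule.finrank_eq_zero]
        exact hinf
      exact aux_supIndep_insert ha (ih.2.mpr hs) hd

lemma aux_iSupIndep {k : ℕ} (V : Fin k → Submodule K M) [∀ i, FiniteDimensional K (V i)] :
    finrank K ↥(⨆ i, V i) ≤ ∑ i, finrank K (V i) ∧
      (iSupIndep V ↔ finrank K ↥(⨆ i, V i) = ∑ i, finrank K (V i)) := by
  have h := aux_finrank_sup V Finset.univ
  rw [Finset.sup_univ_eq_iSup] at h
  exact ⟨h.1, iSupIndep_iff_supIndep_univ.trans h.2⟩

end Aux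
open Module Submodule

instance fd_stoich (R : Finset (Rxn S)) : FiniteDimensional ℝ (stoichSubspace R) :=
  FiniteDimensional.span_of_finite ℝ (R.finite_toSet.image _)

instance fd_inc (R : Finset (Rxn S)) : FiniteDimensional ℝ (incImage R) :=
  FiniteDimensional.span_of_finite ℝ (R.finite_toSet.image _)

lemma reach_mem_incImage (R : Finset (Rxn S)) (u v : {y : S → ℝ // y ∈ complexesOf R})
    (h : (linkGraph R).Reachable u v) : omegaC u.1 - omegaC v.1 ∈ incImage R := by
  obtain ⟨w⟩ := h
  induction w with
  | nil => simp
  | @cons x y z hxy p ih =>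
    have h1 : omegaC x.1 - omegaC y.1 ∈ incImage R := by
      rcases (hxy : x ≠ y ∧ ((x.1, y.1) ∈ R ∨ (y.1, x.1) ∈ R)).2 with h' | h'
      · have hg : omegaC y.1 - omegaC x.1 ∈ incImage R :=
          Submodule.subset_span ⟨(x.1, y.1), h', rfl⟩
        have := (incImage R).neg_mem hg
        simpa using this
      · exact Submodule.subset_span ⟨(y.1, x.1), h', rfl⟩
    have := (incImage R).add_mem h1 ih
    simpa [sub_add_sub_cancel] using this

lemma finrank_incImage_add (R : Finset (Rxn S)) :
    finrank ℝ (incImage R) + numLinkageClasses R = numComplexes R := by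
  classical
  let G := linkGraph R
  let V := {y : S → ℝ // y ∈ complexesOf R}
  let b : V → V := fun y => (G.connectedComponentMk y).out
  have hout : ∀ c : G.ConnectedComponent, G.connectedComponentMk c.out = c :=
    fun c => c.out_eq
  have hsame : ∀ y : V, G.connectedComponentMk (b y) = G.connectedComponentMk y :=
    fun y => hout _
  have hbfix : ∀ y : V, b (b y) = b y := by
    intro y; show (G.connectedComponentMk (b y)).out = b y
    rw [hsame y]
  let e : V → ((S → ℝ) → ℝ) := fun y => omegaC y.1 - omegaC (b y).1
  let T : Finset V := Finset.univ.filter (fun y => b y ≠ y)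
  have hmemT : ∀ y : V, y ∈ T ↔ b y ≠ y := by
    intro y
    constructor
    · intro hy; exact (Finset.mem_filter.mp hy).2
    · intro hy; exact Finset.mem_filter.mpr ⟨Finset.mem_univ _, hy⟩
  have he_mem : ∀ y : V, e y ∈ Submodule.span ℝ (e '' ↑T) := by
    intro y
    by_cases hy : b y = y
    · show omegaC y.1 - omegaC (b y).1 ∈ _
      rw [hy, sub_self]; exact Submodule.zero_mem _
    · exact Submodule.subset_span ⟨y, Finset.mem_coe.mpr ((hmemT y).mpr hy), rfl⟩
  have hspan : incImage R = Submodule.span ℝ (e '' ↑T) := by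
    apply le_antisymm
    · rw [incImage]
      apply Submodule.span_le.mpr
      rintro x ⟨r, hr, rfl⟩
      show omegaC r.2 - omegaC r.1 ∈ (Submodule.span ℝ (e '' ↑T) : Set _)
      by_cases h12 : r.1 = r.2
      · rw [h12, sub_self]; exact Submodule.zero_mem _
      · have hm1 : r.1 ∈ complexesOf R :=
          Finset.mem_union_left _ (Finset.mem_image_of_mem _ hr)
        have hm2 : r.2 ∈ complexesOf R :=
          Finset.mem_union_right _ (Finset.mem_image_of_mem _ hr)
        let u : V := ⟨r.1, hm1⟩
        let v : V := ⟨r.2, hm2⟩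
        have hadj : G.Adj u v := by
          refine (⟨fun h => h12 (congrArg Subtype.val h), Or.inl ?_⟩ : u ≠ v ∧ ((u.1, v.1) ∈ R ∨ (v.1, u.1) ∈ R))
          show (r.1, r.2) ∈ R
          simpa using hr
        have hbc : b u = b v := by
          show (G.connectedComponentMk u).out = (G.connectedComponentMk v).out
          rw [SimpleGraph.ConnectedComponent.sound hadj.reachable]
        have heq : omegaC r.2 - omegaC r.1 = e v - e u := by
          show _ = (omegaC v.1 - omegaC (b v).1) - (omegaC u.1 - omegaC (b u).1)
          rw [hbc]; ring
        rw [heq]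
        exact Submodule.sub_mem _ (he_mem v) (he_mem u)
    · apply Submodule.span_le.mpr
      rintro x ⟨y, _, rfl⟩
      exact reach_mem_incImage R y (b y)
        (SimpleGraph.ConnectedComponent.exact (hsame y).symm)
  have hli : LinearIndependent ℝ (fun y : (↑T : Set V) => e y.1) := by
    rw [linearIndependent_iff']
    intro s g hsum i hi
    have hTmem : ∀ j : (↑T : Set V), b j.1 ≠ j.1 :=
      fun j => (hmemT j.1).mp (Finset.mem_coe.mp j.2)
    have hev := congrFun hsum i.1.1
    rw [Finset.sum_apply] at hev
    have heval : ∀ j : (↑T : Set V), e j.1 i.1.1 = if i = j then 1 else 0 := by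
      intro j
      show (omegaC j.1.1 - omegaC (b j.1).1) i.1.1 = _
      have h2 : omegaC (b j.1).1 i.1.1 = 0 := by
        rw [omegaC]
        simp only [ite_eq_right_iff, one_ne_zero]
        intro hh
        have hij : i.1 = b j.1 := Subtype.ext hh
        have hfix : b i.1 = i.1 := by rw [hij, hbfix]
        exact absurd hfix (hTmem i)
      have h1 : omegaC j.1.1 i.1.1 = if i = j then 1 else 0 := by
        rw [omegaC]
        by_cases hij : i = j
        · simp [hij]
        · have hne : i.1.1 ≠ j.1.1 := by
            intro hh; exact hij (Subtype.ext (Subtype.ext hh))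
          simp [hne, hij]
      rw [Pi.sub_apply, h1, h2, sub_zero]
    rw [Finset.sum_congr rfl (fun j _ => by
      rw [Pi.smul_apply, heval j, smul_eq_mul])] at hev
    simp only [mul_ite, mul_one, mul_zero] at hev
    rw [Finset.sum_ite_eq s i g] at hev
    rw [if_pos hi] at hev
    simpa using hev
  have hdim : finrank ℝ (incImage R) = T.card := by
    rw [hspan, Set.image_eq_range, finrank_span_eq_card hli]
    simp [Nat.card_coe_set_eq]
  have hcomp : numLinkageClasses R = (Finset.univ.filter (fun y : V => b y = y)).card := by
    have hequiv : {y : V // b y = y} ≃ G.ConnectedComponent :=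
      { toFun := fun y => G.connectedComponentMk y.1
        invFun := fun c => ⟨c.out, by
          show (G.connectedComponentMk c.out).out = c.out; rw [hout]⟩
        left_inv := by
          rintro ⟨y, hy⟩
          exact Subtype.ext hy
        right_inv := fun c => hout c }
    rw [numLinkageClasses, ← Nat.card_congr hequiv, Nat.card_eq_fintype_card,
      Fintype.card_subtype]
  have hn : numComplexes R = Fintype.card V := (Fintype.card_coe _).symm
  have hsplit := Finset.card_filter_add_card_filter_not
    (s := (Finset.univ : Finset V)) (p := fun y : V => b y = y)
  rw [Finset.card_univ] at hsplit
  have hT : T.card = (Finset.univ.filter (fun y : V => ¬ b y = y)).card := rfl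
  rw [hdim, hcomp, hn, hT]
  omega

lemma iSup_span_eq {M' : Type*} [AddCommGroup M'] [Module ℝ M'] (g : Rxn S → M')
    {k : ℕ} (R : Finset (Rxn S)) (f : Fin k → Finset (Rxn S))
    (h1 : ∀ i, f i ⊆ R) (h2 : ∀ r ∈ R, ∃ i, r ∈ f i) :
    (⨆ i, Submodule.span ℝ (g '' ↑(f i))) = Submodule.span ℝ (g '' ↑R) := by
  apply le_antisymm
  · exact iSup_le fun i =>
      Submodule.span_mono (Set.image_mono (Finset.coe_subset.mpr (h1 i)))
  · apply Submodule.span_le.mpr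
    rintro x ⟨r, hr, rfl⟩
    obtain ⟨i, hi⟩ := h2 r hr
    exact Submodule.mem_iSup_of_mem i
      (Submodule.subset_span ⟨r, Finset.mem_coe.mpr hi, rfl⟩)

lemma deficiency_eq_sub (R : Finset (Rxn S)) :
    deficiency R = (finrank ℝ (incImage R) : ℤ) - (crnRank R : ℤ) := by
  have h := finrank_incImage_add R
  rw [deficiency]
  omega

/-- a decomposition is bi-independent iff it is independent or incidence
independent and δ = δ_1 + ... + δ_k. -/
theorem stmt_5 (C : Finset (S → ℝ)) (R : Finset (Rxn S)) {k : ℕ}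
    (f : Fin k → Finset (Rxn S)) (hcrn : IsCRN C R) (hdec : IsDecomposition R f) :
    ((IsIndependent R f ∨ IsIncidenceIndependent R f) ∧
        deficiency R = ∑ i, deficiency (f i)) ↔
      (IsIndependent R f ∧ IsIncidenceIndependent R f) := by
  obtain ⟨hne, hdisj, hsub, hcov⟩ := hdec
  have hS : (⨆ i, stoichSubspace (f i)) = stoichSubspace R :=
    iSup_span_eq _ R f hsub hcov
  have hI : (⨆ i, incImage (f i)) = incImage R :=
    iSup_span_eq _ R f hsub hcov
  have hA := aux_iSupIndep (fun i => stoichSubspace (f i))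
  have hB := aux_iSupIndep (fun i => incImage (f i))
  rw [hS] at hA
  rw [hI] at hB
  have hIiff : IsIndependent R f ↔ crnRank R = ∑ i, crnRank (f i) := by
    rw [IsIndependent, crnRank]
    constructor
    · rintro ⟨-, h⟩; exact hA.2.mp h
    · intro h; exact ⟨hS, hA.2.mpr h⟩
  have hJiff : IsIncidenceIndependent R f ↔
      finrank ℝ (incImage R) = ∑ i, finrank ℝ (incImage (f i)) := by
    rw [IsIncidenceIndependent]
    constructor
    · rintro ⟨-, h⟩; exact hB.2.mp h
    · intro h; exact ⟨hI, hB.2.mpr h⟩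
  have hsum : ∑ i, deficiency (f i) =
      ((∑ i, finrank ℝ (incImage (f i)) : ℕ) : ℤ) -
        ((∑ i, crnRank (f i) : ℕ) : ℤ) := by
    rw [Finset.sum_congr rfl (fun i _ => deficiency_eq_sub (f i)),
      Finset.sum_sub_distrib]
    push_cast
    ring
  rw [deficiency_eq_sub R, hsum, hIiff, hJiff]
  have hA1 := hA.1
  have hB1 := hB.1
  rw [crnRank] at *
  omega
end
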